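/- Let H be a complex Hilbert space and let A ⊆ B(H) be a unital subalgebra of the algebra of bounded linear operators on H. Suppose there exist sequences (aᵢ)ᵢ≥1 and (bᵢ)ᵢ≥1 in A such that: (i) the series Σᵢ aᵢaᵢ* and Σᵢ bᵢ*bᵢ converge in operator norm; (ii) Σᵢ aᵢbᵢ = 1 with the series converging in operator norm; (iii) the sequence (aᵢ) is strongly independent, in the sense that the set { (φ(a₁), φ(a₂), …) : φ ∈ A* } is norm dense in ℓ²; and (iv) for every x ∈ A and every continuous linear functional φ ∈ A*, the norm-convergent series satisfy Σᵢ φ(x aᵢ) bᵢ = Σᵢ φ(aᵢ) bᵢ x. Then A is finite dimensional as a complex vector space. -/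

import Mathlib

set_option synthInstance.maxHeartbeats 1000000
set_option maxHeartbeats 1000000

open Filter ContinuousLinearMap

set_option maxHeartbeats 4000000

open scoped InnerProductSpace ComplexConjugate

private lemma hdiag_cs_real (s : Finset ℕ) (f g : ℕ → ℝ) (hf : ∀ i, 0 ≤ f i) (hg : ∀ i, 0 ≤ g i) :
    ∑ i ∈ s, f i * g i ≤ Real.sqrt (∑ i ∈ s, f i ^ 2) * Real.sqrt (∑ i ∈ s, g i ^ 2) := by
  have h1 : (∑ i ∈ s, f i * g i) ^ 2 ≤ (∑ i ∈ s, f i ^ 2) * ∑ i ∈ s, g i ^ 2 :=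
    Finset.sum_mul_sq_le_sq_mul_sq s f g
  have h0 : 0 ≤ ∑ i ∈ s, f i * g i := Finset.sum_nonneg fun i _ => mul_nonneg (hf i) (hg i)
  calc ∑ i ∈ s, f i * g i = Real.sqrt ((∑ i ∈ s, f i * g i) ^ 2) := (Real.sqrt_sq h0).symm
    _ ≤ Real.sqrt ((∑ i ∈ s, f i ^ 2) * ∑ i ∈ s, g i ^ 2) := Real.sqrt_le_sqrt h1
    _ = _ := Real.sqrt_mul (Finset.sum_nonneg fun i _ => sq_nonneg _) _

variable {H : Type} [NormedAddCommGroup H] [InnerProductSpace ℂ H] [CompleteSpace H]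

private lemma hdiag_cs_col (b : ℕ → H →L[ℂ] H) (c : ℕ → ℂ) (F : Finset ℕ) :
    ‖∑ i ∈ F, c i • b i‖ ≤
      Real.sqrt (∑ i ∈ F, ‖c i‖ ^ 2) * Real.sqrt ‖∑ i ∈ F, adjoint (b i) * b i‖ := by
  apply opNorm_le_bound _ (mul_nonneg (Real.sqrt_nonneg _) (Real.sqrt_nonneg _))
  intro ξ
  have step1 : ‖(∑ i ∈ F, c i • b i) ξ‖ ≤ ∑ i ∈ F, ‖c i‖ * ‖b i ξ‖ := by
    rw [ContinuousLinearMap.sum_apply]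
    refine (norm_sum_le _ _).trans (le_of_eq ?_)
    congr 1; ext i; rw [ContinuousLinearMap.smul_apply, norm_smul]
  have step2 : ∑ i ∈ F, ‖c i‖ * ‖b i ξ‖ ≤
      Real.sqrt (∑ i ∈ F, ‖c i‖ ^ 2) * Real.sqrt (∑ i ∈ F, ‖b i ξ‖ ^ 2) :=
    hdiag_cs_real F _ _ (fun i => norm_nonneg _) (fun i => norm_nonneg _)
  have key : ∑ i ∈ F, ‖b i ξ‖ ^ 2 ≤ ‖∑ i ∈ F, adjoint (b i) * b i‖ * ‖ξ‖ ^ 2 := by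
    have : ((∑ i ∈ F, ‖b i ξ‖ ^ 2 : ℝ) : ℂ) = ⟪ξ, (∑ i ∈ F, adjoint (b i) * b i) ξ⟫_ℂ := by
      rw [ContinuousLinearMap.sum_apply, inner_sum]
      push_cast
      congr 1; ext i
      rw [Function.comp_apply, adjoint_inner_right, inner_self_eq_norm_sq_to_K]
      norm_cast
    have h2 : (∑ i ∈ F, ‖b i ξ‖ ^ 2 : ℝ) ≤ ‖⟪ξ, (∑ i ∈ F, adjoint (b i) * b i) ξ⟫_ℂ‖ := by
      rw [← this]
      exact le_abs_self _ |>.trans (by rw [Complex.norm_real]; exact le_refl _)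
    refine h2.trans ?_
    calc ‖⟪ξ, (∑ i ∈ F, adjoint (b i) * b i) ξ⟫_ℂ‖ ≤ ‖ξ‖ * ‖(∑ i ∈ F, adjoint (b i) * b i) ξ‖ :=
        norm_inner_le_norm _ _
      _ ≤ ‖ξ‖ * (‖∑ i ∈ F, adjoint (b i) * b i‖ * ‖ξ‖) := by gcongr; exact le_opNorm _ ξ
      _ = _ := by ring
  calc ‖(∑ i ∈ F, c i • b i) ξ‖ ≤
      Real.sqrt (∑ i ∈ F, ‖c i‖ ^ 2) * Real.sqrt (∑ i ∈ F, ‖b i ξ‖ ^ 2) := step1.trans step2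
    _ ≤ Real.sqrt (∑ i ∈ F, ‖c i‖ ^ 2) *
        Real.sqrt (‖∑ i ∈ F, adjoint (b i) * b i‖ * ‖ξ‖ ^ 2) := by
        exact mul_le_mul_of_nonneg_left (Real.sqrt_le_sqrt key) (Real.sqrt_nonneg _)
    _ = Real.sqrt (∑ i ∈ F, ‖c i‖ ^ 2) * Real.sqrt ‖∑ i ∈ F, adjoint (b i) * b i‖ * ‖ξ‖ := by
        rw [Real.sqrt_mul (norm_nonneg _), Real.sqrt_sq (norm_nonneg _)]
        ring

private lemma hdiag_cs_row (a : ℕ → H →L[ℂ] H) (c : ℕ → ℂ) (F : Finset ℕ) :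
    ‖∑ i ∈ F, c i • a i‖ ≤
      Real.sqrt (∑ i ∈ F, ‖c i‖ ^ 2) * Real.sqrt ‖∑ i ∈ F, a i * adjoint (a i)‖ := by
  have h1 : ‖∑ i ∈ F, c i • a i‖ = ‖∑ i ∈ F, conj (c i) • adjoint (a i)‖ := by
    rw [show (∑ i ∈ F, conj (c i) • adjoint (a i)) = adjoint (∑ i ∈ F, c i • a i) by
      simp [← star_eq_adjoint, star_smul, star_sum]]
    rw [← star_eq_adjoint]
    exact (norm_star _).symm
  rw [h1]
  have h2 := hdiag_cs_col (fun i => adjoint (a i)) (fun i => conj (c i)) F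
  simpa [← star_eq_adjoint, star_star] using h2

private lemma hdiag_sq_sum (g : ℕ → ℂ) (C : ℝ) (hC : 0 ≤ C) (F : Finset ℕ)
    (h : ∀ c : ℕ → ℂ, ‖∑ i ∈ F, c i * g i‖ ≤ C * Real.sqrt (∑ i ∈ F, ‖c i‖ ^ 2)) :
    ∑ i ∈ F, ‖g i‖ ^ 2 ≤ C ^ 2 := by
  set S := ∑ i ∈ F, ‖g i‖ ^ 2 with hS
  have hS0 : 0 ≤ S := Finset.sum_nonneg fun i _ => sq_nonneg _
  have hsum : (∑ i ∈ F, (fun i => conj (g i)) i * g i) = (S : ℂ) := by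
    rw [hS]
    push_cast
    congr 1; ext i
    rw [mul_comm, Complex.mul_conj]
    norm_cast
    rw [Complex.normSq_eq_norm_sq]
  have hb := h (fun i => conj (g i))
  rw [hsum] at hb
  simp only [RCLike.norm_conj] at hb
  rw [Complex.norm_real, Real.norm_of_nonneg hS0] at hb
  -- hb : S ≤ C * Real.sqrt S
  have : S ≤ C * Real.sqrt S := by simpa [← hS] using hb
  nlinarith [Real.sq_sqrt hS0, Real.sqrt_nonneg S, sq_nonneg (Real.sqrt S - C)]

private lemma hdiag_single_apply (i j : ℕ) :
    (lp.single (E := fun _ : ℕ => ℂ) 2 i (1 : ℂ)) j = if j = i then 1 else 0 := by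
  rw [lp.single_apply]
  split <;> simp_all [Pi.single_apply]

private lemma hdiag_lp_sum_sq (f : lp (fun _ : ℕ => ℂ) 2) (s : Finset ℕ) :
    ∑ i ∈ s, ‖f i‖ ^ 2 ≤ ‖f‖ ^ 2 := by
  have h := lp.sum_rpow_le_norm_rpow (p := 2) (by norm_num) f s
  simpa [Real.rpow_natCast, ENNReal.toReal_ofNat] using h

private lemma hdiag_lp_sub_apply (f g : lp (fun _ : ℕ => ℂ) 2) (j : ℕ) :
    (f - g) j = f j - g j := by
  simp [lp.coeFn_sub]

private lemma hdiag_arith (p c D e : ℝ) (hp : 0 ≤ p) (hc : 0 ≤ c) (hD : 0 < D) (he : 0 ≤ e) :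
    p * c * (e / (D * (1 + p) * (1 + c))) ≤ e / D := by
  have h1 : p * c ≤ (1 + p) * (1 + c) := by nlinarith
  have h2 : (0:ℝ) < (1 + p) * (1 + c) := by nlinarith
  rw [show D * (1 + p) * (1 + c) = D * ((1 + p) * (1 + c)) by ring, ← div_div]
  calc p * c * (e / D / ((1 + p) * (1 + c)))
      ≤ (1 + p) * (1 + c) * (e / D / ((1 + p) * (1 + c))) := by
        have h3 : 0 ≤ e / D / ((1 + p) * (1 + c)) := by positivity
        exact mul_le_mul_of_nonneg_right h1 h3
    _ = e / D := by field_simp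

private lemma hdiag_arith2 (p D e : ℝ) (hp : 0 ≤ p) (hD : 0 < D) (he : 0 ≤ e) :
    p * (e / (D * (1 + p))) ≤ e / D := by
  have h1 : p ≤ 1 + p := by linarith
  have h2 : (0:ℝ) < 1 + p := by linarith
  rw [show D * (1 + p) = D * (1 + p) by ring, ← div_div]
  calc p * (e / D / (1 + p)) ≤ (1 + p) * (e / D / (1 + p)) := by
        have h3 : 0 ≤ e / D / (1 + p) := by positivity
        exact mul_le_mul_of_nonneg_right h1 h3
    _ = e / D := by field_simp

private lemma hdiag_tb_approx {X : Type*} [PseudoMetricSpace X] {s : Set X}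
    (h : ∀ ε > (0:ℝ), ∃ t : Set X, TotallyBounded t ∧ ∀ x ∈ s, ∃ y ∈ t, dist x y ≤ ε) :
    TotallyBounded s := by
  rw [Metric.totallyBounded_iff]
  intro ε hε
  obtain ⟨t, ht, hst⟩ := h (ε/3) (by linarith)
  obtain ⟨u, hu, htu⟩ := Metric.totallyBounded_iff.1 ht (ε/3) (by linarith)
  refine ⟨u, hu, fun x hx => ?_⟩
  obtain ⟨y, hyt, hxy⟩ := hst x hx
  obtain ⟨c, hc, hyc⟩ : ∃ c ∈ u, y ∈ Metric.ball c (ε/3) := by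
    simpa using htu hyt
  refine Set.mem_iUnion₂.2 ⟨c, hc, ?_⟩
  have : dist x c ≤ dist x y + dist y c := dist_triangle _ _ _
  simp only [Metric.mem_ball] at hyc ⊢
  linarith

private lemma hdiag_tb_span {E : Type*} [NormedAddCommGroup E] [NormedSpace ℂ E]
    (S : Set E) (hS : S.Finite) (R : ℝ) :
    TotallyBounded {x : E | x ∈ Submodule.span ℂ S ∧ ‖x‖ ≤ R} := by
  set p := Submodule.span ℂ S
  haveI : FiniteDimensional ℂ p := FiniteDimensional.span_of_finite ℂ hS
  have hsub : {x : E | x ∈ p ∧ ‖x‖ ≤ R} ⊆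
      Subtype.val '' (Metric.closedBall (0 : p) R) := by
    rintro x ⟨hxp, hxR⟩
    exact ⟨⟨x, hxp⟩, by simpa [Metric.mem_closedBall, dist_zero_right] using hxR, rfl⟩
  refine TotallyBounded.subset hsub ?_
  exact ((isCompact_closedBall (0:p) R).image continuous_subtype_val).totallyBounded

/-- **Main theorem (concrete form).** Let `A` be a unital subalgebra of `B(H)` for a
complex Hilbert space `H`.  Suppose there are sequences `(aᵢ)`, `(bᵢ)` in `A` such that
(i) the series `Σᵢ aᵢaᵢ*` and `Σᵢ bᵢ*bᵢ` converge in operator norm;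
(ii) `Σᵢ aᵢbᵢ = 1` in operator norm;
(iii) `(aᵢ)` is strongly independent: `{(φ(a₁), φ(a₂), …) : φ ∈ A*}` is norm dense in `ℓ²`;
(iv) for every `x ∈ A` and `φ ∈ A*` the norm-convergent series satisfy
`Σᵢ φ(xaᵢ)bᵢ = Σᵢ φ(aᵢ)bᵢx`.
Then `A` is finite dimensional over ℂ.  (This is the concrete form of `A` having a
diagonal in the Haagerup tensor product `A ⊗ₕ A`.) -/
theorem subalgebra_with_haagerup_diagonal_finiteDimensional
    (H : Type) [NormedAddCommGroup H] [InnerProductSpace ℂ H] [CompleteSpace H]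
    (A : Subalgebra ℂ (H →L[ℂ] H))
    (a b : ℕ → H →L[ℂ] H) (ha : ∀ i, a i ∈ A) (hb : ∀ i, b i ∈ A)
    (hsa : ∃ Sa : H →L[ℂ] H,
      Tendsto (fun N => ∑ i ∈ Finset.range N, a i * adjoint (a i)) atTop (nhds Sa))
    (hsb : ∃ Sb : H →L[ℂ] H,
      Tendsto (fun N => ∑ i ∈ Finset.range N, adjoint (b i) * b i) atTop (nhds Sb))
    (hone : Tendsto (fun N => ∑ i ∈ Finset.range N, a i * b i) atTop (nhds 1))
    (hdense : Dense {v : lp (fun _ : ℕ => ℂ) 2 |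
      ∃ φ : A →L[ℂ] ℂ, ∀ i, v i = φ ⟨a i, ha i⟩})
    (hmod : ∀ (x : H →L[ℂ] H) (hx : x ∈ A) (φ : A →L[ℂ] ℂ),
      ∃ S : H →L[ℂ] H,
        Tendsto (fun N => ∑ i ∈ Finset.range N,
          φ ⟨x * a i, mul_mem hx (ha i)⟩ • b i) atTop (nhds S) ∧
        Tendsto (fun N => ∑ i ∈ Finset.range N,
          φ ⟨a i, ha i⟩ • (b i * x)) atTop (nhds S)) :
    FiniteDimensional ℂ A := by
  classical
  obtain ⟨Sa, hSa⟩ := hsa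
  obtain ⟨Sb, hSb⟩ := hsb
  set Pa : ℕ → H →L[ℂ] H := fun N => ∑ i ∈ Finset.range N, a i * adjoint (a i) with hPa
  set Pb : ℕ → H →L[ℂ] H := fun N => ∑ i ∈ Finset.range N, adjoint (b i) * b i with hPb
  obtain ⟨Ma, hMa0, hMa⟩ : ∃ C, 0 ≤ C ∧ ∀ N, ‖Pa N‖ ≤ C := by
    obtain ⟨C, hC⟩ := (hSa.norm).bddAbove_range
    exact ⟨max C 0, le_max_right _ _, fun N => le_trans (hC ⟨N, rfl⟩) (le_max_left _ _)⟩
  obtain ⟨Mb, hMb0, hMb⟩ : ∃ C, 0 ≤ C ∧ ∀ N, ‖Pb N‖ ≤ C := by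
    obtain ⟨C, hC⟩ := (hSb.norm).bddAbove_range
    exact ⟨max C 0, le_max_right _ _, fun N => le_trans (hC ⟨N, rfl⟩) (le_max_left _ _)⟩
  -- functional square-sum bound
  have fun_bound : ∀ (φ : A →L[ℂ] ℂ) (y : H →L[ℂ] H) (hyA : y ∈ A) (G : Finset ℕ),
      ∑ i ∈ G, ‖φ ⟨y * a i, mul_mem hyA (ha i)⟩‖ ^ 2
        ≤ (‖φ‖ * ‖y‖) ^ 2 * ‖∑ i ∈ G, a i * adjoint (a i)‖ := by
    intro φ y hyA G
    have hCnn : (0:ℝ) ≤ ‖φ‖ * ‖y‖ * Real.sqrt ‖∑ i ∈ G, a i * adjoint (a i)‖ :=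
      mul_nonneg (mul_nonneg (opNorm_nonneg _) (norm_nonneg _)) (Real.sqrt_nonneg _)
    have key : ∀ c : ℕ → ℂ,
        ‖∑ i ∈ G, c i * φ ⟨y * a i, mul_mem hyA (ha i)⟩‖
          ≤ (‖φ‖ * ‖y‖ * Real.sqrt ‖∑ i ∈ G, a i * adjoint (a i)‖)
              * Real.sqrt (∑ i ∈ G, ‖c i‖ ^ 2) := by
      intro c
      have e1 : (∑ i ∈ G, c i * φ ⟨y * a i, mul_mem hyA (ha i)⟩)
          = φ (∑ i ∈ G, c i • ⟨y * a i, mul_mem hyA (ha i)⟩) := by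
        rw [map_sum]
        refine Finset.sum_congr rfl fun i _ => ?_
        rw [map_smul, smul_eq_mul]
      have e2 : ((∑ i ∈ G, c i • (⟨y * a i, mul_mem hyA (ha i)⟩ : A) : A)
            : H →L[ℂ] H) = y * ∑ i ∈ G, c i • a i := by
        rw [show ((∑ i ∈ G, c i • (⟨y * a i, mul_mem hyA (ha i)⟩ : A) : A)
            : H →L[ℂ] H) = A.val.toLinearMap (∑ i ∈ G, c i •
              (⟨y * a i, mul_mem hyA (ha i)⟩ : A)) from rfl]
        rw [map_sum, Finset.mul_sum]
        refine Finset.sum_congr rfl fun i _ => ?_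
        rw [map_smul]
        show c i • (y * a i) = y * (c i • a i)
        rw [mul_smul_comm]
      calc ‖∑ i ∈ G, c i * φ ⟨y * a i, mul_mem hyA (ha i)⟩‖
          = ‖φ (∑ i ∈ G, c i • ⟨y * a i, mul_mem hyA (ha i)⟩)‖ := by rw [e1]
        _ ≤ ‖φ‖ * ‖∑ i ∈ G, c i • (⟨y * a i, mul_mem hyA (ha i)⟩ : A)‖ :=
            le_opNorm _ _
        _ = ‖φ‖ * ‖y * ∑ i ∈ G, c i • a i‖ := by
            rw [show ‖(∑ i ∈ G, c i • (⟨y * a i, mul_mem hyA (ha i)⟩ : A) : A)‖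
              = ‖((∑ i ∈ G, c i • (⟨y * a i, mul_mem hyA (ha i)⟩ : A) : A)
                : H →L[ℂ] H)‖ from rfl, e2]
        _ ≤ ‖φ‖ * (‖y‖ * ‖∑ i ∈ G, c i • a i‖) := by
            gcongr
            exact norm_mul_le _ _
        _ ≤ ‖φ‖ * (‖y‖ * (Real.sqrt (∑ i ∈ G, ‖c i‖ ^ 2)
              * Real.sqrt ‖∑ i ∈ G, a i * adjoint (a i)‖)) := by
            gcongr
            exact hdiag_cs_row a c G
        _ = _ := by ring
    have := hdiag_sq_sum _ _ hCnn G key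
    calc ∑ i ∈ G, ‖φ ⟨y * a i, mul_mem hyA (ha i)⟩‖ ^ 2
        ≤ (‖φ‖ * ‖y‖ * Real.sqrt ‖∑ i ∈ G, a i * adjoint (a i)‖) ^ 2 := this
      _ = (‖φ‖ * ‖y‖) ^ 2 * ‖∑ i ∈ G, a i * adjoint (a i)‖ := by
          rw [mul_pow, Real.sq_sqrt (norm_nonneg _)]
  -- tail estimate for module sums
  have K1 : ∀ (φ : A →L[ℂ] ℂ) (y : H →L[ℂ] H) (hyA : y ∈ A) (N M : ℕ), N ≤ M →
      ‖(∑ i ∈ Finset.range M, φ ⟨y * a i, mul_mem hyA (ha i)⟩ • b i)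
        - ∑ i ∈ Finset.range N, φ ⟨y * a i, mul_mem hyA (ha i)⟩ • b i‖
      ≤ (‖φ‖ * ‖y‖ * Real.sqrt (2 * Ma)) * Real.sqrt ‖Pb M - Pb N‖ := by
    intro φ y hyA N M hNM
    have hGsub : Finset.range N ⊆ Finset.range M := Finset.range_subset_range.2 hNM
    rw [← Finset.sum_sdiff_eq_sub hGsub]
    set G := Finset.range M \ Finset.range N with hG
    have h1 := hdiag_cs_col b (fun i => φ ⟨y * a i, mul_mem hyA (ha i)⟩) G
    have hbsum : (∑ i ∈ G, adjoint (b i) * b i) = Pb M - Pb N := by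
      rw [hG, Finset.sum_sdiff_eq_sub hGsub]
    have hasum : (∑ i ∈ G, a i * adjoint (a i)) = Pa M - Pa N := by
      rw [hG, Finset.sum_sdiff_eq_sub hGsub]
    have h2 : ∑ i ∈ G, ‖φ ⟨y * a i, mul_mem hyA (ha i)⟩‖ ^ 2
        ≤ (‖φ‖ * ‖y‖) ^ 2 * (2 * Ma) := by
      refine (fun_bound φ y hyA G).trans ?_
      rw [hasum]
      have : ‖Pa M - Pa N‖ ≤ 2 * Ma := by
        calc ‖Pa M - Pa N‖ ≤ ‖Pa M‖ + ‖Pa N‖ := norm_sub_le _ _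
          _ ≤ 2 * Ma := by linarith [hMa M, hMa N]
      exact mul_le_mul_of_nonneg_left this (sq_nonneg _)
    have h3 : Real.sqrt (∑ i ∈ G, ‖φ ⟨y * a i, mul_mem hyA (ha i)⟩‖ ^ 2)
        ≤ ‖φ‖ * ‖y‖ * Real.sqrt (2 * Ma) := by
      refine (Real.sqrt_le_sqrt h2).trans (le_of_eq ?_)
      rw [Real.sqrt_mul (sq_nonneg _),
        Real.sqrt_sq (mul_nonneg (opNorm_nonneg _) (norm_nonneg _))]
    calc ‖∑ i ∈ G, φ ⟨y * a i, mul_mem hyA (ha i)⟩ • b i‖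
        ≤ Real.sqrt (∑ i ∈ G, ‖φ ⟨y * a i, mul_mem hyA (ha i)⟩‖ ^ 2)
            * Real.sqrt ‖∑ i ∈ G, adjoint (b i) * b i‖ := h1
      _ = Real.sqrt (∑ i ∈ G, ‖φ ⟨y * a i, mul_mem hyA (ha i)⟩‖ ^ 2)
            * Real.sqrt ‖Pb M - Pb N‖ := by rw [hbsum]
      _ ≤ (‖φ‖ * ‖y‖ * Real.sqrt (2 * Ma)) * Real.sqrt ‖Pb M - Pb N‖ :=
          mul_le_mul_of_nonneg_right h3 (Real.sqrt_nonneg _)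
  -- approximation of b i * x by module sums
  have K2 : ∀ (i : ℕ) (φ : A →L[ℂ] ℂ) (v : lp (fun _ : ℕ => ℂ) 2),
      (∀ j, v j = φ ⟨a j, ha j⟩) → ∀ (y : H →L[ℂ] H) (M : ℕ), i < M →
      ‖b i * y
          - ∑ j ∈ Finset.range M, φ ⟨a j, ha j⟩ • (b j * y)‖
        ≤ ‖lp.single 2 i (1 : ℂ) - v‖ * Real.sqrt Mb * ‖y‖ := by
    intro i φ v hv y M hiM
    set d : ℕ → ℂ := fun j => (if j = i then (1 : ℂ) else 0) - φ ⟨a j, ha j⟩ with hd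
    have e1 : b i * y
          - ∑ j ∈ Finset.range M, φ ⟨a j, ha j⟩ • (b j * y)
        = (∑ j ∈ Finset.range M, d j • b j) * y := by
      rw [Finset.sum_mul]
      have step : ∀ j ∈ Finset.range M, (d j • b j) * y
          = (if j = i then b j * y else 0)
            - φ ⟨a j, ha j⟩ • (b j * y) := by
        intro j _
        rw [hd]
        simp only [sub_smul, smul_mul_assoc, sub_mul, ite_smul, one_smul, zero_smul,
          ite_mul, zero_mul]
      rw [Finset.sum_congr rfl step, Finset.sum_sub_distrib]
      congr 1
      rw [Finset.sum_ite_eq' (Finset.range M) i fun j => b j * y]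
      simp [Finset.mem_range.2 hiM]
    rw [e1]
    set u : lp (fun _ : ℕ => ℂ) 2 := lp.single 2 i (1 : ℂ) with hu
    have hcs := hdiag_cs_col b d (Finset.range M)
    have hdsum : Real.sqrt (∑ j ∈ Finset.range M, ‖d j‖ ^ 2) ≤ ‖u - v‖ := by
      have hdj : ∀ j, d j = (u - v) j := by
        intro j
        have h1 : u j = if j = i then 1 else 0 := by
          rw [hu]; exact hdiag_single_apply i j
        rw [hdiag_lp_sub_apply u v j, h1, hv j]
      have hsum2 : ∑ j ∈ Finset.range M, ‖d j‖ ^ 2 ≤ ‖u - v‖ ^ 2 := by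
        have h' : ∑ j ∈ Finset.range M, ‖(u - v) j‖ ^ 2
            ≤ ‖u - v‖ ^ 2 := hdiag_lp_sum_sq (u - v) (Finset.range M)
        calc ∑ j ∈ Finset.range M, ‖d j‖ ^ 2
            = ∑ j ∈ Finset.range M, ‖(u - v) j‖ ^ 2 := by
              refine Finset.sum_congr rfl fun j _ => by rw [hdj j]
          _ ≤ _ := h'
      refine (Real.sqrt_le_sqrt hsum2).trans (le_of_eq ?_)
      exact Real.sqrt_sq (norm_nonneg _)
    calc ‖(∑ j ∈ Finset.range M, d j • b j) * y‖
        ≤ ‖∑ j ∈ Finset.range M, d j • b j‖ * ‖y‖ := norm_mul_le _ _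
      _ ≤ (Real.sqrt (∑ j ∈ Finset.range M, ‖d j‖ ^ 2) * Real.sqrt ‖Pb M‖)
            * ‖y‖ := by
          exact mul_le_mul_of_nonneg_right hcs (norm_nonneg _)
      _ ≤ ‖u - v‖ * Real.sqrt Mb * ‖y‖ := by
          have h1 : Real.sqrt ‖Pb M‖ ≤ Real.sqrt Mb := Real.sqrt_le_sqrt (hMb M)
          exact mul_le_mul_of_nonneg_right
            (mul_le_mul hdsum h1 (Real.sqrt_nonneg _) (norm_nonneg _)) (norm_nonneg _)
  -- the unit ball of A, viewed inside B(H), is totally bounded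
  have TB : TotallyBounded {y : H →L[ℂ] H | y ∈ A ∧ ‖y‖ ≤ 1} := by
    apply hdiag_tb_approx
    intro ε hε
    set ε' : ℝ := min ε 1 with hε'def
    have hε'0 : 0 < ε' := lt_min hε zero_lt_one
    have hε'ε : ε' ≤ ε := min_le_left _ _
    have hε'1 : ε' ≤ 1 := min_le_right _ _
    obtain ⟨N, hN⟩ : ∃ N, ‖(∑ i ∈ Finset.range N, a i * b i) - 1‖ ≤ ε' / 4 := by
      obtain ⟨N, hN⟩ := (Metric.tendsto_atTop.1 hone) (ε' / 4) (by linarith)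
      refine ⟨N, ?_⟩
      have h := hN N le_rfl
      rw [dist_eq_norm] at h
      exact h.le
    have exdata : ∀ i : ℕ, ∃ (φ : A →L[ℂ] ℂ) (v : lp (fun _ : ℕ => ℂ) 2) (M : ℕ),
        (∀ j, v j = φ ⟨a j, ha j⟩) ∧
        ‖lp.single 2 i (1 : ℂ) - v‖
          ≤ ε' / (4 * (N + 1) * (1 + ‖a i‖) * (1 + Real.sqrt Mb)) ∧
        ∀ m, M ≤ m → ‖Pb m - Pb M‖ ≤
          (ε' / (4 * (N + 1) * (1 + ‖a i‖) * (1 + ‖φ‖) * (1 + Real.sqrt (2 * Ma)))) ^ 2 := by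
      intro i
      have ha1 : (0:ℝ) < 1 + ‖a i‖ := by positivity
      have hb1 : (0:ℝ) < 1 + Real.sqrt Mb := by positivity
      have hδpos : 0 < ε' / (4 * (N + 1) * (1 + ‖a i‖) * (1 + Real.sqrt Mb)) := by
        apply div_pos hε'0
        positivity
      obtain ⟨v, hvmem, hvdist⟩ := hdense.exists_dist_lt (lp.single 2 i (1 : ℂ)) hδpos
      obtain ⟨φ, hφ⟩ := hvmem
      have hφ1 : (0:ℝ) < 1 + ‖φ‖ := by
        have := opNorm_nonneg φ
        linarith
      have hMa1 : (0:ℝ) < 1 + Real.sqrt (2 * Ma) := by positivity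
      have hηpos : 0 < (ε' / (4 * (N + 1) * (1 + ‖a i‖) * (1 + ‖φ‖)
          * (1 + Real.sqrt (2 * Ma)))) ^ 2 := by
        apply pow_pos
        apply div_pos hε'0
        have h0 : (0:ℝ) < 1 + ‖φ‖ := by have := opNorm_nonneg φ; linarith
        have h1 : (0:ℝ) < 4 * (N + 1) * (1 + ‖a i‖) := by positivity
        have h2 : (0:ℝ) < 1 + Real.sqrt (2 * Ma) := by positivity
        exact mul_pos (mul_pos h1 h0) h2
      obtain ⟨M, hM⟩ := Metric.cauchySeq_iff'.1 hSb.cauchySeq _ hηpos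
      refine ⟨φ, v, M, hφ, ?_, fun m hm => ?_⟩
      · rw [dist_eq_norm] at hvdist
        exact hvdist.le
      · have h := hM m hm
        rw [dist_eq_norm] at h
        exact h.le
    choose φf vf Mf hvf hsingle htail using exdata
    set K0 : ℕ := (Finset.range N).sup Mf with hK0
    set SS : Set (H →L[ℂ] H) :=
      (fun p : ℕ × ℕ => a p.1 * b p.2) '' ↑(Finset.range N ×ˢ Finset.range K0) with hSSdef
    have hSSfin : SS.Finite := (Finset.range N ×ˢ Finset.range K0).finite_toSet.image _
    refine ⟨{y | y ∈ Submodule.span ℂ SS ∧ ‖y‖ ≤ 2}, hdiag_tb_span SS hSSfin 2, ?_⟩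
    rintro y ⟨hyA, hy1⟩
    set Fx : ℕ → H →L[ℂ] H := fun i => (hmod y hyA (φf i)).choose with hFxdef
    have hFx1 : ∀ i, Tendsto (fun m => ∑ j ∈ Finset.range m,
        (φf i) ⟨y * a j, mul_mem hyA (ha j)⟩ • b j) atTop (nhds (Fx i)) :=
      fun i => (hmod y hyA (φf i)).choose_spec.1
    have hFx2 : ∀ i, Tendsto (fun m => ∑ j ∈ Finset.range m,
        (φf i) ⟨a j, ha j⟩ • (b j * y)) atTop (nhds (Fx i)) :=
      fun i => (hmod y hyA (φf i)).choose_spec.2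
    set gx : H →L[ℂ] H := ∑ i ∈ Finset.range N, a i *
      (∑ j ∈ Finset.range (Mf i), (φf i) ⟨y * a j, mul_mem hyA (ha j)⟩ • b j) with hgxdef
    -- estimate 2 : b i * y is close to Fx i
    have E2 : ∀ i, ‖b i * y - Fx i‖ ≤
        ε' / (4 * (N + 1) * (1 + ‖a i‖) * (1 + Real.sqrt Mb)) * Real.sqrt Mb := by
      intro i
      have hlim : Tendsto (fun m => ‖b i * y - ∑ j ∈ Finset.range m,
          (φf i) ⟨a j, ha j⟩ • (b j * y)‖) atTop (nhds ‖b i * y - Fx i‖) :=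
        (tendsto_const_nhds.sub (hFx2 i)).norm
      refine le_of_tendsto hlim ?_
      filter_upwards [eventually_ge_atTop (i + 1)] with m hm
      have hK2 := K2 i (φf i) (vf i) (hvf i) y m (by omega)
      calc ‖b i * y - ∑ j ∈ Finset.range m, (φf i) ⟨a j, ha j⟩ • (b j * y)‖
          ≤ ‖lp.single 2 i (1 : ℂ) - vf i‖ * Real.sqrt Mb * ‖y‖ := hK2
        _ ≤ (ε' / (4 * (N + 1) * (1 + ‖a i‖) * (1 + Real.sqrt Mb))) * Real.sqrt Mb * 1 := by
            gcongr
            exact hsingle i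
        _ = ε' / (4 * (N + 1) * (1 + ‖a i‖) * (1 + Real.sqrt Mb)) * Real.sqrt Mb := mul_one _
    -- estimate 3 : Fx i is close to its partial sum at Mf i
    have E3 : ∀ i, ‖Fx i - ∑ j ∈ Finset.range (Mf i),
        (φf i) ⟨y * a j, mul_mem hyA (ha j)⟩ • b j‖ ≤
        ε' / (4 * (N + 1) * (1 + ‖a i‖)) := by
      intro i
      have hηnn : 0 ≤ ε' / (4 * (N + 1) * (1 + ‖a i‖) * (1 + ‖φf i‖)
          * (1 + Real.sqrt (2 * Ma))) := by
        have h0 : (0:ℝ) < 1 + ‖φf i‖ := by have := opNorm_nonneg (φf i); linarith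
        have h1 : (0:ℝ) < 4 * (N + 1) * (1 + ‖a i‖) := by positivity
        have h2 : (0:ℝ) < 1 + Real.sqrt (2 * Ma) := by positivity
        exact div_nonneg hε'0.le (mul_pos (mul_pos h1 h0) h2).le
      have hlim : Tendsto (fun m => ‖(∑ j ∈ Finset.range m,
          (φf i) ⟨y * a j, mul_mem hyA (ha j)⟩ • b j) - ∑ j ∈ Finset.range (Mf i),
          (φf i) ⟨y * a j, mul_mem hyA (ha j)⟩ • b j‖) atTop
          (nhds ‖Fx i - ∑ j ∈ Finset.range (Mf i),
            (φf i) ⟨y * a j, mul_mem hyA (ha j)⟩ • b j‖) :=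
        ((hFx1 i).sub tendsto_const_nhds).norm
      refine le_of_tendsto hlim ?_
      filter_upwards [eventually_ge_atTop (Mf i)] with m hm
      have hK1 := K1 (φf i) y hyA (Mf i) m hm
      have htl := htail i m hm
      have hsq : Real.sqrt ‖Pb m - Pb (Mf i)‖ ≤
          ε' / (4 * (N + 1) * (1 + ‖a i‖) * (1 + ‖φf i‖) * (1 + Real.sqrt (2 * Ma))) :=
        (Real.sqrt_le_sqrt htl).trans (le_of_eq (Real.sqrt_sq hηnn))
      calc ‖(∑ j ∈ Finset.range m, (φf i) ⟨y * a j, mul_mem hyA (ha j)⟩ • b j)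
            - ∑ j ∈ Finset.range (Mf i), (φf i) ⟨y * a j, mul_mem hyA (ha j)⟩ • b j‖
          ≤ (‖φf i‖ * ‖y‖ * Real.sqrt (2 * Ma)) * Real.sqrt ‖Pb m - Pb (Mf i)‖ := hK1
        _ ≤ (‖φf i‖ * 1 * Real.sqrt (2 * Ma)) *
            (ε' / (4 * (N + 1) * (1 + ‖a i‖) * (1 + ‖φf i‖) * (1 + Real.sqrt (2 * Ma)))) := by
            gcongr
        _ = ‖φf i‖ * Real.sqrt (2 * Ma) *
            (ε' / ((4 * (N + 1) * (1 + ‖a i‖)) * (1 + ‖φf i‖) * (1 + Real.sqrt (2 * Ma)))) := by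
            ring_nf
        _ ≤ ε' / (4 * (N + 1) * (1 + ‖a i‖)) := by
            apply hdiag_arith _ _ _ _ (opNorm_nonneg _) (Real.sqrt_nonneg _)
              (by positivity) hε'0.le
    -- estimate 1
    have E1 : ‖y - (∑ i ∈ Finset.range N, a i * b i) * y‖ ≤ ε' / 4 := by
      have hre : y - (∑ i ∈ Finset.range N, a i * b i) * y
          = (1 - ∑ i ∈ Finset.range N, a i * b i) * y := by
        rw [sub_mul, one_mul]
      rw [hre]
      calc ‖(1 - ∑ i ∈ Finset.range N, a i * b i) * y‖
          ≤ ‖(1 : H →L[ℂ] H) - ∑ i ∈ Finset.range N, a i * b i‖ * ‖y‖ := norm_mul_le _ _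
        _ ≤ (ε' / 4) * 1 := by
            have h1 : ‖(1 : H →L[ℂ] H) - ∑ i ∈ Finset.range N, a i * b i‖
                = ‖(∑ i ∈ Finset.range N, a i * b i) - 1‖ := norm_sub_rev _ _
            rw [h1]
            gcongr
        _ = ε' / 4 := mul_one _
    have hsplit : y - gx = (y - (∑ i ∈ Finset.range N, a i * b i) * y)
        + ((∑ i ∈ Finset.range N, a i * (b i * y - Fx i))
        + (∑ i ∈ Finset.range N, a i * (Fx i - ∑ j ∈ Finset.range (Mf i),
            (φf i) ⟨y * a j, mul_mem hyA (ha j)⟩ • b j))) := by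
      rw [hgxdef]
      simp only [mul_sub, Finset.sum_sub_distrib, Finset.sum_mul, mul_assoc]
      abel
    have sum_small : ∀ (g : ℕ → H →L[ℂ] H),
        (∀ i ∈ Finset.range N, ‖g i‖ ≤ ε' / (4 * (N + 1))) →
        ‖∑ i ∈ Finset.range N, g i‖ ≤ ε' / 4 := by
      intro g hg
      calc ‖∑ i ∈ Finset.range N, g i‖ ≤ ∑ i ∈ Finset.range N, ‖g i‖ := norm_sum_le _ _
        _ ≤ ∑ _i ∈ Finset.range N, ε' / (4 * (N + 1)) := Finset.sum_le_sum hg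
        _ = N * (ε' / (4 * (N + 1))) := by
            rw [Finset.sum_const, Finset.card_range, nsmul_eq_mul]
        _ ≤ (N + 1) * (ε' / (4 * (N + 1))) := by
            have hpos : 0 ≤ ε' / (4 * (N + 1)) := by positivity
            have hNN : (N:ℝ) ≤ N + 1 := by linarith
            exact mul_le_mul_of_nonneg_right hNN hpos
        _ = ε' / 4 := by
            have : (4:ℝ) * (N + 1) ≠ 0 := by positivity
            field_simp
    have hB2 : ‖∑ i ∈ Finset.range N, a i * (b i * y - Fx i)‖ ≤ ε' / 4 := by
      apply sum_small
      intro i _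
      calc ‖a i * (b i * y - Fx i)‖ ≤ ‖a i‖ * ‖b i * y - Fx i‖ := norm_mul_le _ _
        _ ≤ ‖a i‖ * (ε' / (4 * (N + 1) * (1 + ‖a i‖) * (1 + Real.sqrt Mb)) * Real.sqrt Mb) :=
            mul_le_mul_of_nonneg_left (E2 i) (norm_nonneg _)
        _ = ‖a i‖ * Real.sqrt Mb *
            (ε' / ((4 * (N + 1)) * (1 + ‖a i‖) * (1 + Real.sqrt Mb))) := by ring_nf
        _ ≤ ε' / (4 * (N + 1)) := by
            apply hdiag_arith _ _ _ _ (norm_nonneg _) (Real.sqrt_nonneg _) (by positivity) hε'0.le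
    have hB3 : ‖∑ i ∈ Finset.range N, a i * (Fx i - ∑ j ∈ Finset.range (Mf i),
        (φf i) ⟨y * a j, mul_mem hyA (ha j)⟩ • b j)‖ ≤ ε' / 4 := by
      apply sum_small
      intro i _
      calc ‖a i * (Fx i - ∑ j ∈ Finset.range (Mf i),
            (φf i) ⟨y * a j, mul_mem hyA (ha j)⟩ • b j)‖
          ≤ ‖a i‖ * ‖Fx i - ∑ j ∈ Finset.range (Mf i),
            (φf i) ⟨y * a j, mul_mem hyA (ha j)⟩ • b j‖ := norm_mul_le _ _
        _ ≤ ‖a i‖ * (ε' / (4 * (N + 1) * (1 + ‖a i‖))) :=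
            mul_le_mul_of_nonneg_left (E3 i) (norm_nonneg _)
        _ = ‖a i‖ * (ε' / ((4 * (N + 1)) * (1 + ‖a i‖))) := by ring_nf
        _ ≤ ε' / (4 * (N + 1)) := hdiag_arith2 _ _ _ (norm_nonneg _) (by positivity) hε'0.le
    have hyg : ‖y - gx‖ ≤ ε' := by
      rw [hsplit]
      calc ‖(y - (∑ i ∈ Finset.range N, a i * b i) * y)
          + ((∑ i ∈ Finset.range N, a i * (b i * y - Fx i))
          + (∑ i ∈ Finset.range N, a i * (Fx i - ∑ j ∈ Finset.range (Mf i),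
              (φf i) ⟨y * a j, mul_mem hyA (ha j)⟩ • b j)))‖
          ≤ ‖y - (∑ i ∈ Finset.range N, a i * b i) * y‖
            + (‖∑ i ∈ Finset.range N, a i * (b i * y - Fx i)‖
            + ‖∑ i ∈ Finset.range N, a i * (Fx i - ∑ j ∈ Finset.range (Mf i),
                (φf i) ⟨y * a j, mul_mem hyA (ha j)⟩ • b j)‖) :=
            (norm_add_le _ _).trans (by gcongr; exact norm_add_le _ _)
        _ ≤ ε' / 4 + (ε' / 4 + ε' / 4) :=
            add_le_add E1 (add_le_add hB2 hB3)
        _ ≤ ε' := by linarith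
    refine ⟨gx, ⟨?_, ?_⟩, ?_⟩
    · rw [hgxdef]
      refine Submodule.sum_mem _ fun i hi => ?_
      rw [Finset.mul_sum]
      refine Submodule.sum_mem _ fun j hj => ?_
      rw [mul_smul_comm]
      refine Submodule.smul_mem _ _ (Submodule.subset_span ?_)
      refine ⟨(i, j), ?_, rfl⟩
      have hiN := Finset.mem_range.1 hi
      have hjM := Finset.mem_range.1 hj
      have hjK : j < K0 := lt_of_lt_of_le hjM (Finset.le_sup hi)
      simp [Finset.mem_product, Finset.mem_range, hiN, hjK]
    · calc ‖gx‖ = ‖y - (y - gx)‖ := by rw [sub_sub_cancel]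
        _ ≤ ‖y‖ + ‖y - gx‖ := norm_sub_le _ _
        _ ≤ 1 + 1 := add_le_add hy1 (hyg.trans hε'1)
        _ = 2 := by norm_num
    · rw [dist_eq_norm]
      exact hyg.trans hε'ε
  -- conclude by the Riesz separation argument
  by_contra hfin
  obtain ⟨R, f, hR1, hfR, hsep⟩ := exists_seq_norm_le_one_le_norm_sub (𝕜 := ℂ) (E := A) hfin
  have hR0 : (0:ℝ) < R := lt_trans zero_lt_one hR1
  set yv : ℕ → H →L[ℂ] H := fun n => ((R : ℂ))⁻¹ • ((f n : H →L[ℂ] H)) with hyvdef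
  have hRnorm : ‖((R : ℂ))⁻¹‖ = R⁻¹ := by
    rw [norm_inv, Complex.norm_real, Real.norm_of_nonneg hR0.le]
  have hyvT : ∀ n, yv n ∈ {y : H →L[ℂ] H | y ∈ A ∧ ‖y‖ ≤ 1} := by
    intro n
    refine ⟨A.smul_mem (f n).2 _, ?_⟩
    rw [hyvdef]
    calc ‖((R:ℂ))⁻¹ • ((f n : H →L[ℂ] H))‖ = ‖((R:ℂ))⁻¹‖ * ‖(f n : H →L[ℂ] H)‖ := norm_smul _ _
      _ = R⁻¹ * ‖f n‖ := by rw [hRnorm]; rfl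
      _ ≤ R⁻¹ * R := mul_le_mul_of_nonneg_left (hfR n) (by positivity)
      _ = 1 := inv_mul_cancel₀ hR0.ne'
  have hyvsep : ∀ m n, m ≠ n → R⁻¹ ≤ ‖yv m - yv n‖ := by
    intro m n hmn
    have h1 : yv m - yv n = ((R:ℂ))⁻¹ • (((f m - f n : A)) : H →L[ℂ] H) := by
      rw [hyvdef]
      have : (((f m - f n : A)) : H →L[ℂ] H) = (f m : H →L[ℂ] H) - (f n : H →L[ℂ] H) := rfl
      rw [this, smul_sub]
    rw [h1, norm_smul, hRnorm]
    have h2 : ‖(((f m - f n : A)) : H →L[ℂ] H)‖ = ‖f m - f n‖ := rfl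
    rw [h2]
    calc R⁻¹ = R⁻¹ * 1 := (mul_one _).symm
      _ ≤ R⁻¹ * ‖f m - f n‖ := mul_le_mul_of_nonneg_left (hsep hmn) (by positivity)
  obtain ⟨t, htfin, hcover⟩ := Metric.totallyBounded_iff.1 TB (R⁻¹ / 3) (by positivity)
  have hchoice : ∀ n : ℕ, ∃ z : t, dist (yv n) (z : H →L[ℂ] H) < R⁻¹ / 3 := by
    intro n
    have h := hcover (hyvT n)
    rw [Set.mem_iUnion₂] at h
    obtain ⟨z, hzt, hmem⟩ := h
    exact ⟨⟨z, hzt⟩, Metric.mem_ball.1 hmem⟩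
  choose z hz using hchoice
  haveI : Finite t := htfin.to_subtype
  obtain ⟨m, n, hmn, hzeq⟩ := Finite.exists_ne_map_eq_of_infinite z
  have hlt : dist (yv m) (yv n) < 2 * (R⁻¹ / 3) := by
    calc dist (yv m) (yv n)
        ≤ dist (yv m) ((z m : H →L[ℂ] H)) + dist ((z m : H →L[ℂ] H)) (yv n) :=
          dist_triangle _ _ _
      _ = dist (yv m) ((z m : H →L[ℂ] H)) + dist (yv n) ((z n : H →L[ℂ] H)) := by
          rw [dist_comm ((z m : H →L[ℂ] H)) (yv n), hzeq]
      _ < R⁻¹ / 3 + R⁻¹ / 3 := add_lt_add (hz m) (hz n)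
      _ = 2 * (R⁻¹ / 3) := by ring
  have hge := hyvsep m n hmn
  rw [dist_eq_norm] at hlt
  have : (0:ℝ) < R⁻¹ := by positivity
  linarith
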